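/- For b ≥ 1, let α_{k,n}^{(b)} := [u^{n-k}] (u/h_b(u))^{n+1} with h_b(u) = ∑_{j=1}^{b} ((-1)^{j-1}/b) binom(b,j) binom(b,j-1) u^j. Then for n ≥ 3, α_{n-3,n}^{(b)} = ((n+1)/12) * (((3n^2+9n+7)/12) b^3 - ((3n^2-3n-11)/12) b^2 - ((3n+2)/3) b - 1) * b * (b-1)^2. -/

import Mathlib

open PowerSeries

/-- The power series `h_b(u)/u = ∑_{i=0}^{b-1} ((-1)^i/b) binom(b,i+1) binom(b,i) u^i`,
where `h_b(u) = ∑_{j=1}^{b} ((-1)^{j-1}/b) binom(b,j) binom(b,j-1) u^j`. For `b ≥ 1` it has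
constant term `1`, so that `u/h_b(u) = (hDivU b)⁻¹` is a well-defined formal power series. -/
noncomputable def hDivU (b : ℕ) : PowerSeries ℚ :=
  ∑ i ∈ Finset.range b,
    PowerSeries.C ((-1 : ℚ) ^ i / b * (Nat.choose b (i + 1)) * (Nat.choose b i)) *
      PowerSeries.X ^ i

/-- Coefficient extraction `[u^d] F` for an integer index `d`, with the convention that
`[u^d] F = 0` for `d < 0`. -/
noncomputable def coeffZ (d : ℤ) (F : PowerSeries ℚ) : ℚ :=
  if 0 ≤ d then PowerSeries.coeff d.toNat F else 0

/-- `α_{k,n}^{(b)} = [u^{n-k}] (u/h_b(u))^{n+1}`. -/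
noncomputable def alphaC (b k n : ℕ) : ℚ :=
  coeffZ ((n : ℤ) - (k : ℤ)) ((hDivU b)⁻¹ ^ (n + 1))

lemma coeff_mul_one' (A B : PowerSeries ℚ) :
    PowerSeries.coeff 1 (A * B) =
      PowerSeries.coeff 0 A * PowerSeries.coeff 1 B +
      PowerSeries.coeff 1 A * PowerSeries.coeff 0 B := by
  rw [PowerSeries.coeff_mul, Finset.Nat.sum_antidiagonal_eq_sum_range_succ_mk]
  simp [Finset.sum_range_succ]

lemma coeff_mul_two' (A B : PowerSeries ℚ) :
    PowerSeries.coeff 2 (A * B) =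
      PowerSeries.coeff 0 A * PowerSeries.coeff 2 B +
      PowerSeries.coeff 1 A * PowerSeries.coeff 1 B +
      PowerSeries.coeff 2 A * PowerSeries.coeff 0 B := by
  rw [PowerSeries.coeff_mul, Finset.Nat.sum_antidiagonal_eq_sum_range_succ_mk]
  simp [Finset.sum_range_succ]

lemma coeff_mul_three' (A B : PowerSeries ℚ) :
    PowerSeries.coeff 3 (A * B) =
      PowerSeries.coeff 0 A * PowerSeries.coeff 3 B +
      PowerSeries.coeff 1 A * PowerSeries.coeff 2 B +
      PowerSeries.coeff 2 A * PowerSeries.coeff 1 B +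
      PowerSeries.coeff 3 A * PowerSeries.coeff 0 B := by
  rw [PowerSeries.coeff_mul, Finset.Nat.sum_antidiagonal_eq_sum_range_succ_mk]
  simp [Finset.sum_range_succ]

lemma coeff_pow123 (F : PowerSeries ℚ) (h0 : PowerSeries.coeff 0 F = 1) (m : ℕ) :
    PowerSeries.coeff 0 (F ^ m) = 1 ∧
    PowerSeries.coeff 1 (F ^ m) = m * PowerSeries.coeff 1 F ∧
    PowerSeries.coeff 2 (F ^ m) = m * PowerSeries.coeff 2 F
      + (m * (m - 1)) / 2 * (PowerSeries.coeff 1 F) ^ 2 ∧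
    PowerSeries.coeff 3 (F ^ m) = m * PowerSeries.coeff 3 F
      + m * (m - 1) * PowerSeries.coeff 1 F * PowerSeries.coeff 2 F
      + (m * (m - 1) * (m - 2)) / 6 * (PowerSeries.coeff 1 F) ^ 3 := by
  induction m with
  | zero => norm_num [PowerSeries.coeff_zero_eq_constantCoeff]
  | succ m ih =>
    obtain ⟨i0, i1, i2, i3⟩ := ih
    rw [pow_succ]
    rw [coeff_mul_one' (F ^ m) F, coeff_mul_two' (F ^ m) F, coeff_mul_three' (F ^ m) F,
      PowerSeries.coeff_mul, Finset.Nat.sum_antidiagonal_eq_sum_range_succ_mk]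
    simp only [Finset.sum_range_succ, Finset.sum_range_zero, Nat.sub_self, i0, i1, i2, i3, h0]
    push_cast
    refine ⟨by ring, by ring, by ring, by ring⟩

lemma coeff_hDivU (b i : ℕ) :
    PowerSeries.coeff i (hDivU b) =
      (-1 : ℚ) ^ i / b * (Nat.choose b (i + 1)) * (Nat.choose b i) := by
  rw [hDivU, map_sum]
  simp only [PowerSeries.coeff_C_mul, PowerSeries.coeff_X_pow, mul_ite, mul_one, mul_zero]
  simp only [eq_comm (a := i)]
  rw [Finset.sum_ite_eq' (Finset.range b)]
  split_ifs with h
  · rfl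
  · rw [Finset.mem_range, not_lt] at h
    rw [Nat.choose_eq_zero_of_lt (by omega)]
    ring

lemma cast_choose_two' (b : ℕ) : ((b.choose 2 : ℕ) : ℚ) = b * (b - 1) / 2 := by
  induction b with
  | zero => simp
  | succ b ih =>
    rw [Nat.choose_succ_succ]; push_cast
    rw [show ((b.choose 2 : ℕ) : ℚ) = _ from ih]
    push_cast [Nat.choose_one_right]; ring

lemma cast_choose_three (b : ℕ) : ((b.choose 3 : ℕ) : ℚ) = b * (b - 1) * (b - 2) / 6 := by
  induction b with
  | zero => simp
  | succ b ih =>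
    rw [Nat.choose_succ_succ]; push_cast
    rw [show ((b.choose 3 : ℕ) : ℚ) = _ from ih, cast_choose_two']; ring

lemma cast_choose_four (b : ℕ) : ((b.choose 4 : ℕ) : ℚ) = b * (b - 1) * (b - 2) * (b - 3) / 24 := by
  induction b with
  | zero => simp
  | succ b ih =>
    rw [Nat.choose_succ_succ]; push_cast
    rw [show ((b.choose 4 : ℕ) : ℚ) = _ from ih, cast_choose_three]; ring

lemma coeff0_hDivU (b : ℕ) (hb : 1 ≤ b) : PowerSeries.coeff 0 (hDivU b) = 1 := by
  rw [coeff_hDivU]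
  simp only [pow_zero, Nat.choose_one_right, Nat.choose_zero_right]
  field_simp
  simp

lemma coeff1_hDivU (b : ℕ) (hb : 1 ≤ b) :
    PowerSeries.coeff 1 (hDivU b) = -((b : ℚ) * (b - 1) / 2) := by
  rw [coeff_hDivU, cast_choose_two']
  simp only [Nat.choose_one_right]
  have : (b : ℚ) ≠ 0 := by positivity
  field_simp

lemma coeff2_hDivU (b : ℕ) (hb : 1 ≤ b) :
    PowerSeries.coeff 2 (hDivU b) = (b : ℚ) * (b - 1) ^ 2 * (b - 2) / 12 := by
  rw [coeff_hDivU, cast_choose_two', cast_choose_three]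
  have : (b : ℚ) ≠ 0 := by positivity
  field_simp; ring

lemma coeff3_hDivU (b : ℕ) (hb : 1 ≤ b) :
    PowerSeries.coeff 3 (hDivU b) = -((b : ℚ) * (b - 1) ^ 2 * (b - 2) ^ 2 * (b - 3) / 144) := by
  rw [coeff_hDivU, cast_choose_three, cast_choose_four]
  have : (b : ℚ) ≠ 0 := by positivity
  field_simp; ring

theorem stmt18 (b n : ℕ) (hb : 1 ≤ b) (hn : 3 ≤ n) :
    alphaC b (n - 3) n =
      ((n : ℚ) + 1) / 12 *
        ((3 * (n : ℚ) ^ 2 + 9 * n + 7) / 12 * (b : ℚ) ^ 3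
          - (3 * (n : ℚ) ^ 2 - 3 * n - 11) / 12 * (b : ℚ) ^ 2
          - (3 * (n : ℚ) + 2) / 3 * b - 1) * b * ((b : ℚ) - 1) ^ 2 := by
  have hB : (b : ℚ) ≠ 0 := by positivity
  set G : PowerSeries ℚ := (hDivU b)⁻¹ with hG
  have hc0 : PowerSeries.constantCoeff (hDivU b) ≠ 0 := by
    rw [← PowerSeries.coeff_zero_eq_constantCoeff, coeff0_hDivU b hb]; norm_num
  have hmul : hDivU b * G = 1 := PowerSeries.mul_inv_cancel _ hc0
  have g0 : PowerSeries.coeff 0 G = 1 := by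
    rw [PowerSeries.coeff_zero_eq_constantCoeff, hG, PowerSeries.constantCoeff_inv,
      ← PowerSeries.coeff_zero_eq_constantCoeff, coeff0_hDivU b hb]
    norm_num
  have c0 := coeff0_hDivU b hb
  have c1 := coeff1_hDivU b hb
  have c2 := coeff2_hDivU b hb
  have c3 := coeff3_hDivU b hb
  have e1 := congrArg (PowerSeries.coeff 1) hmul
  have e2 := congrArg (PowerSeries.coeff 2) hmul
  have e3 := congrArg (PowerSeries.coeff 3) hmul
  rw [coeff_mul_one', c0, c1, g0, PowerSeries.coeff_one] at e1
  rw [coeff_mul_two', c0, c1, c2, g0, PowerSeries.coeff_one] at e2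
  rw [coeff_mul_three', c0, c1, c2, c3, g0, PowerSeries.coeff_one] at e3
  norm_num at e1 e2 e3
  have g1 : PowerSeries.coeff 1 G = (b : ℚ) * (b - 1) / 2 := by linarith
  rw [g1] at e2 e3
  have g2 : PowerSeries.coeff 2 G =
      (b : ℚ) ^ 2 * (b - 1) ^ 2 / 4 - (b : ℚ) * (b - 1) ^ 2 * (b - 2) / 12 := by linarith
  rw [g2] at e3
  have g3 : PowerSeries.coeff 3 G =
      (b : ℚ) * (b - 1) ^ 2 * (b - 2) ^ 2 * (b - 3) / 144
      - ((b : ℚ) * (b - 1) ^ 2 * (b - 2) / 12) * ((b : ℚ) * (b - 1) / 2)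
      + ((b : ℚ) * (b - 1) / 2) *
        ((b : ℚ) ^ 2 * (b - 1) ^ 2 / 4 - (b : ℚ) * (b - 1) ^ 2 * (b - 2) / 12) := by
    linarith
  obtain ⟨_, p1, p2, p3⟩ := coeff_pow123 G g0 (n + 1)
  have hidx : (n : ℤ) - ((n - 3 : ℕ) : ℤ) = 3 := by omega
  have key : alphaC b (n - 3) n = PowerSeries.coeff 3 (G ^ (n + 1)) := by
    rw [alphaC, hG, coeffZ, hidx]
    norm_num
    rfl
  rw [key, p3, g1, g2, g3]
  push_cast
  ring
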